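/- In the Heisenberg double H(B*) of the dual of the Taft algebra, the left regular action of B on B* satisfies E^m k^n ⇀ (F^a κ^b) = [a choose m]_q ([m]_q!/(q−q⁻¹)^m) q^{−(b+2a)n/2 − m(a+b) + m(m+1)/2} F^{a−m} κ^b. -/

import Mathlib

/-!
STATEMENT 8: In the dual of the Taft algebra, the left regular action
`(x ⇀ β)(y) = β(y x)` satisfies
`E^m k^n ⇀ (F^a κ^b) = [a,m]_q ([m]_q!/(q−q⁻¹)^m) q^{−(b+2a)n/2 − m(a+b) + m(m+1)/2}
  F^{a−m} κ^b` (with `F^{a−m} = 0` when `m > a`; here the gaussian binomial `[a,m]_q`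
vanishes when `m > a`).
-/

open TensorProduct

noncomputable section

/-- The q-integer `[n]_q`. -/
def qint (q : ℂ) (n : ℕ) : ℂ := (q ^ n - q⁻¹ ^ n) / (q - q⁻¹)

/-- The q-factorial. -/
def qfac (q : ℂ) : ℕ → ℂ
  | 0 => 1
  | n + 1 => qint q (n + 1) * qfac q n

/-- Symmetric Gaussian binomial via the q-Pascal recursion. -/
def qbinom (q : ℂ) : ℕ → ℕ → ℂ
  | _, 0 => 1
  | 0, _ + 1 => 0
  | n + 1, k + 1 => q ^ (k + 1) * qbinom q n (k + 1) + q⁻¹ ^ (n - k) * qbinom q n k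

variable {T : Type*} [Ring T] [Algebra ℂ T]

/-- Convolution product on `B*` dual to the comultiplication `Δ`. -/
def dualMulT (Δ : T →ₐ[ℂ] T ⊗[ℂ] T) (α β : Module.Dual ℂ T) : Module.Dual ℂ T :=
  (TensorProduct.lift ((LinearMap.mul ℂ ℂ).compl₁₂ α β)).comp Δ.toLinearMap

/-- Convolution powers in `B*`, with unit the counit. -/
def dualPow (Δ : T →ₐ[ℂ] T ⊗[ℂ] T) (ε0 f : Module.Dual ℂ T) : ℕ → Module.Dual ℂ T
  | 0 => ε0
  | n + 1 => dualMulT Δ f (dualPow Δ ε0 f n)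

/-- Left regular action of `B` on `B*`: `(x ⇀ β)(y) = β (y * x)`. -/
def lactT (x : T) (β : Module.Dual ℂ T) : Module.Dual ℂ T :=
  β.comp (LinearMap.mulRight ℂ x)

/-! ### Auxiliary lemmas -/

section Aux

lemma qint_zero' (q : ℂ) : qint q 0 = 0 := by simp [qint]

lemma qint_one' (q : ℂ) (hd : q - q⁻¹ ≠ 0) : qint q 1 = 1 := by
  simp [qint, div_self hd]

lemma qfac_zero' (q : ℂ) : qfac q 0 = 1 := rfl

lemma qfac_succ' (q : ℂ) (n : ℕ) : qfac q (n + 1) = qint q (n + 1) * qfac q n := rfl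

lemma qbinom_zero' (q : ℂ) (n : ℕ) : qbinom q n 0 = 1 := by
  cases n <;> rfl

lemma qbinom_succ' (q : ℂ) (n k : ℕ) :
    qbinom q (n+1) (k+1) = q ^ (k + 1) * qbinom q n (k + 1) + q⁻¹ ^ (n - k) * qbinom q n k := rfl

lemma qint_step' (q : ℂ) (hq : q ≠ 0) (hd : q - q⁻¹ ≠ 0) (n : ℕ) :
    q * qint q n + q⁻¹ ^ n = qint q (n + 1) := by
  unfold qint
  rw [← mul_div_assoc, div_add' _ _ _ hd]
  congr 1
  ring

lemma qbinom_one' (q : ℂ) (hq : q ≠ 0) (hd : q - q⁻¹ ≠ 0) (n : ℕ) :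
    qbinom q n 1 = qint q n := by
  induction n with
  | zero => simp [qbinom, qint]
  | succ n ih =>
    rw [show (1:ℕ) = 0 + 1 by rfl, qbinom_succ', ih, qbinom_zero']
    simpa using qint_step' q hq hd n

lemma qbinom_eq_zero' (q : ℂ) : ∀ a m : ℕ, a < m → qbinom q a m = 0 := by
  intro a
  induction a with
  | zero => intro m hm; obtain ⟨k, rfl⟩ := Nat.exists_eq_add_of_lt hm; simp [qbinom]
  | succ a ih =>
    intro m hm
    obtain ⟨k, rfl⟩ := Nat.exists_eq_succ_of_ne_zero (by omega : m ≠ 0)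
    rw [qbinom_succ', ih _ (by omega), ih _ (by omega)]
    ring

lemma qint_pascal' (q : ℂ) (n k : ℕ) (h : k ≤ n) :
    q ^ (k+1) * qint q (n - k) + q⁻¹ ^ (n - k) * qint q (k+1) = qint q (n+1) := by
  obtain ⟨j, rfl⟩ := Nat.exists_eq_add_of_le h
  rw [Nat.add_sub_cancel_left]
  unfold qint
  rw [← mul_div_assoc, ← mul_div_assoc, ← add_div]
  congr 1
  ring

lemma qbinom_key' (q : ℂ) (hq : q ≠ 0) (hd : q - q⁻¹ ≠ 0) :
    ∀ a m : ℕ, qbinom q a m * qint q (a - m) = qbinom q a (m+1) * qint q (m+1) := by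
  intro a
  induction a with
  | zero =>
    intro m; simp [qbinom, qint_zero']
  | succ a ih =>
    intro m
    rcases Nat.lt_or_ge m (a+1) with hlt | hge
    · cases m with
      | zero =>
        rw [qbinom_zero', qbinom_one' q hq hd, qint_one' q hd, Nat.sub_zero, mul_one, one_mul]
      | succ k =>
        have hk : k < a := by omega
        rw [qbinom_succ', Nat.succ_sub_succ]
        rw [qbinom_succ']
        have h1 := ih k
        have h2 := ih (k+1)
        have hS1 := qint_pascal' q a k hk.le
        have hS2 := qint_pascal' q a (k+1) hk
        calc (q ^ (k+1) * qbinom q a (k+1) + q⁻¹ ^ (a - k) * qbinom q a k) * qint q (a - k)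
            = q ^ (k+1) * qint q (a-k) * qbinom q a (k+1)
              + q⁻¹ ^ (a - k) * (qbinom q a k * qint q (a-k)) := by ring
          _ = q ^ (k+1) * qint q (a-k) * qbinom q a (k+1)
              + q⁻¹ ^ (a - k) * (qbinom q a (k+1) * qint q (k+1)) := by rw [h1]
          _ = (q ^ (k+1) * qint q (a-k) + q⁻¹ ^ (a-k) * qint q (k+1)) * qbinom q a (k+1) := by
              ring
          _ = qint q (a+1) * qbinom q a (k+1) := by rw [hS1]
          _ = (q ^ (k+2) * qint q (a-(k+1)) + q⁻¹ ^ (a-(k+1)) * qint q (k+2)) * qbinom q a (k+1) := by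
              rw [hS2]
          _ = q ^ (k+2) * (qbinom q a (k+1) * qint q (a-(k+1)))
              + q⁻¹ ^ (a-(k+1)) * qint q (k+2) * qbinom q a (k+1) := by ring
          _ = q ^ (k+2) * (qbinom q a (k+2) * qint q (k+2))
              + q⁻¹ ^ (a-(k+1)) * qint q (k+2) * qbinom q a (k+1) := by rw [h2]
          _ = (q ^ (k+1+1) * qbinom q a (k+1+1) + q⁻¹ ^ (a - (k+1)) * qbinom q a (k+1))
              * qint q (k+1+1) := by ring
    · have h1 : qbinom q (a+1) (m+1) = 0 := qbinom_eq_zero' q _ _ (by omega)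
      rcases Nat.lt_or_ge (a+1) m with h | h
      · rw [qbinom_eq_zero' q _ _ h, h1]; ring
      · have hm : m = a + 1 := by omega
        subst hm
        rw [h1, Nat.sub_self, qint_zero']; ring

variable {T : Type*} [Ring T] [Algebra ℂ T]

lemma lactT_apply (x : T) (β : Module.Dual ℂ T) (y : T) : lactT x β y = β (y * x) := rfl

lemma lactT_one (β : Module.Dual ℂ T) : lactT 1 β = β := by
  ext y; simp [lactT_apply]

lemma lactT_mul (x y : T) (β : Module.Dual ℂ T) :
    lactT (x * y) β = lactT x (lactT y β) := by
  ext z; simp [lactT_apply, mul_assoc]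

lemma lactT_smul (x : T) (c : ℂ) (β : Module.Dual ℂ T) :
    lactT x (c • β) = c • lactT x β := by
  ext y; simp [lactT_apply]

lemma lift_mul_tmul (α β : Module.Dual ℂ T) (u v : T) :
    TensorProduct.lift ((LinearMap.mul ℂ ℂ).compl₁₂ α β) (u ⊗ₜ[ℂ] v) = α u * β v := by
  simp [TensorProduct.lift.tmul, LinearMap.compl₁₂_apply]

lemma dualMulT_apply (Δ : T →ₐ[ℂ] T ⊗[ℂ] T) (α β : Module.Dual ℂ T) (x : T) :
    dualMulT Δ α β x = TensorProduct.lift ((LinearMap.mul ℂ ℂ).compl₁₂ α β) (Δ x) := rfl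

lemma dualPow_zero (Δ : T →ₐ[ℂ] T ⊗[ℂ] T) (ε0 f : Module.Dual ℂ T) :
    dualPow Δ ε0 f 0 = ε0 := rfl

lemma dualPow_succ (Δ : T →ₐ[ℂ] T ⊗[ℂ] T) (ε0 f : Module.Dual ℂ T) (n : ℕ) :
    dualPow Δ ε0 f (n + 1) = dualMulT Δ f (dualPow Δ ε0 f n) := rfl

lemma dualMulT_smul_left (Δ : T →ₐ[ℂ] T ⊗[ℂ] T) (c : ℂ) (α β : Module.Dual ℂ T) :
    dualMulT Δ (c • α) β = c • dualMulT Δ α β := by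
  ext x
  rw [LinearMap.smul_apply, dualMulT_apply, dualMulT_apply, smul_eq_mul]
  generalize Δ x = z
  induction z using TensorProduct.induction_on with
  | zero => simp
  | tmul u v => rw [lift_mul_tmul, lift_mul_tmul]; simp; ring
  | add w₁ w₂ ih₁ ih₂ => rw [map_add, map_add, ih₁, ih₂]; ring

lemma dualMulT_smul_right (Δ : T →ₐ[ℂ] T ⊗[ℂ] T) (c : ℂ) (α β : Module.Dual ℂ T) :
    dualMulT Δ α (c • β) = c • dualMulT Δ α β := by
  ext x
  rw [LinearMap.smul_apply, dualMulT_apply, dualMulT_apply, smul_eq_mul]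
  generalize Δ x = z
  induction z using TensorProduct.induction_on with
  | zero => simp
  | tmul u v => rw [lift_mul_tmul, lift_mul_tmul]; simp; ring
  | add w₁ w₂ ih₁ ih₂ => rw [map_add, map_add, ih₁, ih₂]; ring

lemma dualMulT_zero_left (Δ : T →ₐ[ℂ] T ⊗[ℂ] T) (β : Module.Dual ℂ T) :
    dualMulT Δ (0 : Module.Dual ℂ T) β = 0 := by
  ext x
  rw [dualMulT_apply, LinearMap.zero_apply]
  generalize Δ x = z
  induction z using TensorProduct.induction_on with
  | zero => simp
  | tmul u v => rw [lift_mul_tmul]; simp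
  | add w₁ w₂ ih₁ ih₂ => rw [map_add, ih₁, ih₂]; ring

lemma dualMulT_zero_right (Δ : T →ₐ[ℂ] T ⊗[ℂ] T) (α : Module.Dual ℂ T) :
    dualMulT Δ α (0 : Module.Dual ℂ T) = 0 := by
  ext x
  rw [dualMulT_apply, LinearMap.zero_apply]
  generalize Δ x = z
  induction z using TensorProduct.induction_on with
  | zero => simp
  | tmul u v => rw [lift_mul_tmul]; simp
  | add w₁ w₂ ih₁ ih₂ => rw [map_add, ih₁, ih₂]; ring

lemma lift_mul_mulRight (α β : Module.Dual ℂ T) (w₁ w₂ : T) (z : T ⊗[ℂ] T) :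
    TensorProduct.lift ((LinearMap.mul ℂ ℂ).compl₁₂ α β) (z * (w₁ ⊗ₜ[ℂ] w₂))
      = TensorProduct.lift ((LinearMap.mul ℂ ℂ).compl₁₂ (lactT w₁ α) (lactT w₂ β)) z := by
  induction z using TensorProduct.induction_on with
  | zero => simp
  | tmul u v =>
    rw [Algebra.TensorProduct.tmul_mul_tmul, lift_mul_tmul, lift_mul_tmul]
    rfl
  | add w₁' w₂' ih₁ ih₂ => rw [add_mul, map_add, map_add, ih₁, ih₂]

lemma lactK_dualMul (Δ : T →ₐ[ℂ] T ⊗[ℂ] T) (K : T) (hΔK : Δ K = K ⊗ₜ[ℂ] K)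
    (α β : Module.Dual ℂ T) :
    lactT K (dualMulT Δ α β) = dualMulT Δ (lactT K α) (lactT K β) := by
  ext x
  rw [lactT_apply, dualMulT_apply, dualMulT_apply, map_mul, hΔK, lift_mul_mulRight]

lemma lactE_dualMul (Δ : T →ₐ[ℂ] T ⊗[ℂ] T) (E K : T)
    (hΔE : Δ E = 1 ⊗ₜ[ℂ] E + E ⊗ₜ[ℂ] (K * K))
    (α β : Module.Dual ℂ T) :
    lactT E (dualMulT Δ α β)
      = dualMulT Δ α (lactT E β) + dualMulT Δ (lactT E α) (lactT K (lactT K β)) := by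
  ext x
  rw [LinearMap.add_apply, lactT_apply, dualMulT_apply, dualMulT_apply, dualMulT_apply,
    map_mul, hΔE, mul_add, map_add, lift_mul_mulRight, lift_mul_mulRight, lactT_one,
    ← lactT_mul]

lemma counit_left {ι : Type*} (bas : Module.Basis ι ℂ T) (E K : T)
    (hbase : ∀ i, ∃ s v : ℕ, bas i = E ^ s * K ^ v)
    (Δ : T →ₐ[ℂ] T ⊗[ℂ] T)
    (hΔE : Δ E = 1 ⊗ₜ[ℂ] E + E ⊗ₜ[ℂ] (K * K)) (hΔK : Δ K = K ⊗ₜ[ℂ] K)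
    (εa : T →ₐ[ℂ] ℂ) (hεE : εa E = 0) (hεK : εa K = 1)
    (β : Module.Dual ℂ T) :
    dualMulT Δ εa.toLinearMap β = β := by
  set g : T →ₐ[ℂ] T :=
    ((Algebra.TensorProduct.lid ℂ T).toAlgHom.comp
      ((Algebra.TensorProduct.map εa (AlgHom.id ℂ T)).comp Δ)) with hg
  have hgE : g E = E := by
    simp [hg, hΔE, hεE, Algebra.TensorProduct.lid_tmul]
  have hgK : g K = K := by
    simp [hg, hΔK, hεK, Algebra.TensorProduct.lid_tmul]
  have hgid : ∀ x, g x = x := by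
    have : g.toLinearMap = LinearMap.id := by
      apply Module.Basis.ext bas
      intro i
      obtain ⟨s, v, hi⟩ := hbase i
      simp only [hi, LinearMap.id_coe, id_eq, AlgHom.toLinearMap_apply, map_mul, map_pow,
        hgE, hgK]
    intro x
    exact LinearMap.congr_fun this x
  ext x
  rw [dualMulT_apply]
  have hzz : ∀ z : T ⊗[ℂ] T,
      TensorProduct.lift ((LinearMap.mul ℂ ℂ).compl₁₂ εa.toLinearMap β) z
        = β ((Algebra.TensorProduct.lid ℂ T)
            ((Algebra.TensorProduct.map εa (AlgHom.id ℂ T)) z)) := by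
    intro z
    induction z using TensorProduct.induction_on with
    | zero => simp
    | tmul u v =>
      rw [lift_mul_tmul]
      simp [Algebra.TensorProduct.map_tmul, Algebra.TensorProduct.lid_tmul]
    | add w₁ w₂ ih₁ ih₂ => rw [map_add, map_add, map_add, map_add, ih₁, ih₂]
  rw [hzz (Δ x)]
  exact congrArg β (hgid x)

end Aux

set_option maxHeartbeats 1000000 in
theorem taft_left_regular_action_formula
    (p : ℕ) (hp : 2 ≤ p)
    (q q2 : ℂ)
    (hq : q = Complex.exp (Real.pi * Complex.I / p))
    (hq2 : q2 = Complex.exp (Real.pi * Complex.I / (2 * p)))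
    (E K : T)
    (hcomm : K * E = q • (E * K)) (hEnil : E ^ p = 0) (hKord : K ^ (4 * p) = 1)
    (bas : Module.Basis (Fin p × ZMod (4 * p)) ℂ T)
    (hbas : ∀ mn : Fin p × ZMod (4 * p), bas mn = E ^ (mn.1 : ℕ) * K ^ mn.2.val)
    (Δ : T →ₐ[ℂ] T ⊗[ℂ] T)
    (hΔE : Δ E = 1 ⊗ₜ[ℂ] E + E ⊗ₜ[ℂ] (K * K)) (hΔK : Δ K = K ⊗ₜ[ℂ] K)
    (εa : T →ₐ[ℂ] ℂ) (hεE : εa E = 0) (hεK : εa K = 1)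
    (F κ : Module.Dual ℂ T)
    (hF : ∀ mn : Fin p × ZMod (4 * p),
      F (bas mn) = if (mn.1 : ℕ) = 1 then q ^ (-(mn.2.val : ℤ)) / (q - q⁻¹) else 0)
    (hκ : ∀ mn : Fin p × ZMod (4 * p),
      κ (bas mn) = if (mn.1 : ℕ) = 0 then q2 ^ (-(mn.2.val : ℤ)) else 0) :
    ∀ m n a b : ℕ, m < p → a < p → n < 4 * p → b < 4 * p →
      lactT (E ^ m * K ^ n) (dualMulT Δ (dualPow Δ εa.toLinearMap F a)
          (dualPow Δ εa.toLinearMap κ b))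
        = (qbinom q a m * qfac q m * ((q - q⁻¹) ^ m)⁻¹
            * q2 ^ (-(((b : ℤ) + 2 * a) * n) - 2 * m * (a + b) + m * (m + 1) : ℤ)) •
            dualMulT Δ (dualPow Δ εa.toLinearMap F (a - m))
              (dualPow Δ εa.toLinearMap κ b) := by
  intro m n a b hm ha hn hb
  haveI : NeZero (4 * p) := ⟨by omega⟩
  -- basic scalar facts
  have hpC : (p : ℂ) ≠ 0 := Nat.cast_ne_zero.mpr (by omega)
  have hq0 : q ≠ 0 := by rw [hq]; exact Complex.exp_ne_zero _
  have hq20 : q2 ≠ 0 := by rw [hq2]; exact Complex.exp_ne_zero _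
  have hq2quot : ∀ x1 y1 x2 y2 : ℕ, x1 + y2 = x2 + y1 →
      q2 ^ x1 * (q2 ^ y1)⁻¹ = q2 ^ x2 * (q2 ^ y2)⁻¹ := by
    intro x1 y1 x2 y2 h
    rw [← div_eq_mul_inv, ← div_eq_mul_inv,
      div_eq_div_iff (pow_ne_zero _ hq20) (pow_ne_zero _ hq20), ← pow_add, ← pow_add, h]
  have hqq2 : q = q2 ^ 2 := by
    rw [hq, hq2, ← Complex.exp_nat_mul]
    congr 1
    field_simp
    ring
  have h4p : q2 ^ (4 * p) = 1 := by
    rw [hq2, ← Complex.exp_nat_mul]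
    rw [show ((4 * p : ℕ) : ℂ) * (Real.pi * Complex.I / (2 * p)) = 2 * Real.pi * Complex.I by
      push_cast; field_simp; ring]
    exact Complex.exp_two_pi_mul_I
  have hq4p : q ^ (4 * p) = 1 := by
    rw [hqq2, ← pow_mul, mul_comm 2 (4 * p), pow_mul, h4p, one_pow]
  have hd : q - q⁻¹ ≠ 0 := by
    intro h
    have hqe : q = q⁻¹ := sub_eq_zero.mp h
    have h2 : q ^ 2 = 1 := by
      calc q ^ 2 = q * q := sq q
        _ = q * q⁻¹ := by rw [← hqe]
        _ = 1 := mul_inv_cancel₀ hq0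
    rw [hq, ← Complex.exp_nat_mul, Complex.exp_eq_one_iff] at h2
    obtain ⟨j, hj⟩ := h2
    have hπ : (Real.pi : ℂ) ≠ 0 := by simpa using Real.pi_ne_zero
    have hI : Complex.I ≠ 0 := Complex.I_ne_zero
    have hne : (2 * (Real.pi : ℂ) * Complex.I) ≠ 0 := by simp [hπ, hI]
    have key : ((j * p : ℤ) : ℂ) = 1 := by
      push_cast
      field_simp at hj
      apply mul_left_cancel₀ hne
      rw [mul_one]
      linear_combination (-(Real.pi : ℂ) * Complex.I) * hj
    have key2 : (j * p : ℤ) = 1 := by exact_mod_cast key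
    have : (p : ℤ) ∣ 1 := ⟨j, by linarith⟩
    have := Int.le_of_dvd one_pos this
    omega
  -- reduction of powers
  have hqred : ∀ t : ℕ, q ^ (t % (4 * p)) = q ^ t := by
    intro t
    conv_rhs => rw [← Nat.div_add_mod t (4 * p)]
    rw [pow_add, pow_mul, hq4p, one_pow, one_mul]
  have hq2red : ∀ t : ℕ, q2 ^ (t % (4 * p)) = q2 ^ t := by
    intro t
    conv_rhs => rw [← Nat.div_add_mod t (4 * p)]
    rw [pow_add, pow_mul, h4p, one_pow, one_mul]
  have hKred : ∀ t : ℕ, K ^ (t % (4 * p)) = K ^ t := by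
    intro t
    conv_rhs => rw [← Nat.div_add_mod t (4 * p)]
    rw [pow_add, pow_mul, hKord, one_pow, one_mul]
  have hbasval : ∀ (s : ℕ) (hs : s < p) (t : ℕ),
      E ^ s * K ^ t = bas (⟨s, hs⟩, (t : ZMod (4 * p))) := by
    intro s hs t
    rw [hbas]
    show E ^ s * K ^ t = E ^ s * K ^ (((t : ZMod (4 * p))).val)
    rw [ZMod.val_natCast, hKred]
  -- evaluation lemmas
  have Fval : ∀ s t : ℕ, s ≤ p →
      F (E ^ s * K ^ t) = if s = 1 then (q ^ t)⁻¹ / (q - q⁻¹) else 0 := by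
    intro s t hs
    rcases lt_or_eq_of_le hs with h | rfl
    · rw [hbasval s h t, hF]
      show (if s = 1 then q ^ (-(((t : ZMod (4 * p))).val : ℤ)) / (q - q⁻¹) else 0) = _
      rw [ZMod.val_natCast, zpow_neg, zpow_natCast, hqred]
    · rw [hEnil, zero_mul, map_zero, if_neg (by omega)]
  have κval : ∀ s t : ℕ, s ≤ p →
      κ (E ^ s * K ^ t) = if s = 0 then (q2 ^ t)⁻¹ else 0 := by
    intro s t hs
    rcases lt_or_eq_of_le hs with h | rfl
    · rw [hbasval s h t, hκ]
      show (if s = 0 then q2 ^ (-(((t : ZMod (4 * p))).val : ℤ)) else 0) = _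
      rw [ZMod.val_natCast, zpow_neg, zpow_natCast, hq2red]
    · rw [hEnil, zero_mul, map_zero, if_neg (by omega)]
  have εval : ∀ s t : ℕ, εa (E ^ s * K ^ t) = if s = 0 then 1 else 0 := by
    intro s t
    rw [map_mul, map_pow, map_pow, hεE, hεK, one_pow, mul_one]
    rcases s with _ | s
    · simp
    · simp [zero_pow]
  have hKE : ∀ v : ℕ, K ^ v * E = q ^ v • (E * K ^ v) := by
    intro v
    induction v with
    | zero => simp
    | succ v ih =>
      rw [pow_succ, mul_assoc, hcomm, mul_smul_comm, ← mul_assoc, ih, smul_mul_assoc,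
        smul_smul, mul_assoc, ← pow_succ]
      congr 1
      ring
  -- generator action lemmas
  have lactK_F : lactT K F = (q2 ^ 2)⁻¹ • F := by
    apply Module.Basis.ext bas
    rintro ⟨⟨s, hs⟩, j⟩
    have hbv : bas (⟨s, hs⟩, j) = E ^ s * K ^ j.val := hbas _
    rw [LinearMap.smul_apply, hbv, lactT_apply, mul_assoc, ← pow_succ,
      Fval s (j.val + 1) hs.le, Fval s j.val hs.le, smul_eq_mul]
    by_cases h1 : s = 1
    · rw [if_pos h1, if_pos h1, ← hqq2, pow_succ, mul_inv]
      ring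
    · rw [if_neg h1, if_neg h1, mul_zero]
  have lactK_κ : lactT K κ = q2⁻¹ • κ := by
    apply Module.Basis.ext bas
    rintro ⟨⟨s, hs⟩, j⟩
    have hbv : bas (⟨s, hs⟩, j) = E ^ s * K ^ j.val := hbas _
    rw [LinearMap.smul_apply, hbv, lactT_apply, mul_assoc, ← pow_succ,
      κval s (j.val + 1) hs.le, κval s j.val hs.le, smul_eq_mul]
    by_cases h1 : s = 0
    · rw [if_pos h1, if_pos h1, pow_succ, mul_inv]
      ring
    · rw [if_neg h1, if_neg h1, mul_zero]
  have lactK_ε : lactT K εa.toLinearMap = εa.toLinearMap := by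
    apply Module.Basis.ext bas
    rintro ⟨⟨s, hs⟩, j⟩
    have hbv : bas (⟨s, hs⟩, j) = E ^ s * K ^ j.val := hbas _
    rw [hbv, lactT_apply, AlgHom.toLinearMap_apply, AlgHom.toLinearMap_apply, mul_assoc,
      ← pow_succ, εval s (j.val + 1), εval s j.val]
  have lactE_F : lactT E F = (q - q⁻¹)⁻¹ • εa.toLinearMap := by
    apply Module.Basis.ext bas
    rintro ⟨⟨s, hs⟩, j⟩
    have hbv : bas (⟨s, hs⟩, j) = E ^ s * K ^ j.val := hbas _
    rw [LinearMap.smul_apply, hbv, lactT_apply, AlgHom.toLinearMap_apply, mul_assoc,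
      hKE j.val, mul_smul_comm, ← mul_assoc, ← pow_succ, map_smul, smul_eq_mul,
      Fval (s + 1) j.val (by omega), εval s j.val, smul_eq_mul]
    by_cases h0 : s = 0
    · rw [if_pos (by omega : s + 1 = 1), if_pos h0, mul_one, div_eq_mul_inv, ← mul_assoc,
        mul_inv_cancel₀ (pow_ne_zero _ hq0), one_mul]
    · rw [if_neg (by omega : ¬ s + 1 = 1), if_neg h0, mul_zero, mul_zero]
  have lactE_κ : lactT E κ = 0 := by
    apply Module.Basis.ext bas
    rintro ⟨⟨s, hs⟩, j⟩
    have hbv : bas (⟨s, hs⟩, j) = E ^ s * K ^ j.val := hbas _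
    rw [hbv, lactT_apply, mul_assoc, hKE j.val, mul_smul_comm, ← mul_assoc, ← pow_succ,
      map_smul, smul_eq_mul, κval (s + 1) j.val (by omega), if_neg (by omega), mul_zero,
      LinearMap.zero_apply]
  have lactE_ε : lactT E εa.toLinearMap = 0 := by
    apply Module.Basis.ext bas
    rintro ⟨⟨s, hs⟩, j⟩
    have hbv : bas (⟨s, hs⟩, j) = E ^ s * K ^ j.val := hbas _
    rw [hbv, lactT_apply, AlgHom.toLinearMap_apply, mul_assoc, hKE j.val, mul_smul_comm,
      ← mul_assoc, ← pow_succ, map_smul, smul_eq_mul, εval (s + 1) j.val,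
      if_neg (by omega), mul_zero, LinearMap.zero_apply]
  -- unit law
  have hunit : ∀ β : Module.Dual ℂ T, dualMulT Δ εa.toLinearMap β = β := by
    intro β
    exact counit_left bas E K (fun i => ⟨(i.1 : ℕ), i.2.val, hbas i⟩) Δ hΔE hΔK εa hεE hεK β
  -- power ladders
  have hFpK : ∀ a', lactT K (dualPow Δ εa.toLinearMap F a')
      = (q2 ^ (2 * a'))⁻¹ • dualPow Δ εa.toLinearMap F a' := by
    intro a'
    induction a' with
    | zero => simpa [dualPow_zero] using lactK_ε
    | succ a' ih =>
      rw [dualPow_succ, lactK_dualMul Δ K hΔK, lactK_F, ih, dualMulT_smul_left,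
        dualMulT_smul_right, smul_smul, ← dualPow_succ]
      congr 1
      rw [← mul_inv, ← pow_add, show 2 + 2 * a' = 2 * (a' + 1) by ring]
  have hκpK : ∀ b', lactT K (dualPow Δ εa.toLinearMap κ b')
      = (q2 ^ b')⁻¹ • dualPow Δ εa.toLinearMap κ b' := by
    intro b'
    induction b' with
    | zero => simpa [dualPow_zero] using lactK_ε
    | succ b' ih =>
      rw [dualPow_succ, lactK_dualMul Δ K hΔK, lactK_κ, ih, dualMulT_smul_left,
        dualMulT_smul_right, smul_smul, ← dualPow_succ]
      congr 1
      rw [← mul_inv, ← pow_succ']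
  have hκpE : ∀ b', lactT E (dualPow Δ εa.toLinearMap κ b') = 0 := by
    intro b'
    induction b' with
    | zero => exact lactE_ε
    | succ b' ih =>
      rw [dualPow_succ, lactE_dualMul Δ E K hΔE, ih, lactE_κ, dualMulT_zero_right,
        dualMulT_zero_left, add_zero]
  have hFpE : ∀ a', lactT E (dualPow Δ εa.toLinearMap F a')
      = (qint q a' * (q - q⁻¹)⁻¹ * q2 ^ 2 * (q2 ^ (2 * a'))⁻¹) •
          dualPow Δ εa.toLinearMap F (a' - 1) := by
    intro a'
    induction a' with
    | zero =>
      rw [dualPow_zero, lactE_ε, qint_zero']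
      simp
    | succ a' ih =>
      rw [dualPow_succ, lactE_dualMul Δ E K hΔE, ih, lactE_F, hFpK a', lactT_smul, hFpK a',
        smul_smul, dualMulT_smul_right, dualMulT_smul_left, dualMulT_smul_right, smul_smul,
        hunit]
      rcases a' with _ | a''
      · rw [qint_zero']
        simp only [zero_mul, zero_smul, zero_add, Nat.zero_sub, Nat.add_sub_cancel]
        congr 1
        rw [qint_one' q hd]
        simp [hq20]
      · rw [← dualPow_succ]
        rw [show a'' + 1 - 1 + 1 = a'' + 1 from rfl, Nat.add_sub_cancel]
        rw [← add_smul]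
        congr 1
        have hstep := qint_step' q hq0 hd (a'' + 1)
        have hq2q : ∀ x : ℕ, q2 ^ (2 * x) = q ^ x := by
          intro x; rw [hqq2, ← pow_mul]
        have hqt : q * q⁻¹ = 1 := mul_inv_cancel₀ hq0
        rw [hq2q, hq2q, ← hqq2, ← hstep, ← inv_pow, ← inv_pow]
        linear_combination
          (-((q - q⁻¹)⁻¹ * (qint q (a'' + 1) * q * q⁻¹ ^ (a'' + 1)
            + q⁻¹ ^ (2 * (a'' + 1))))) * hqt
  -- Phi level
  have hΦK : lactT K (dualMulT Δ (dualPow Δ εa.toLinearMap F a) (dualPow Δ εa.toLinearMap κ b))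
      = (q2 ^ (2 * a + b))⁻¹ •
          dualMulT Δ (dualPow Δ εa.toLinearMap F a) (dualPow Δ εa.toLinearMap κ b) := by
    rw [lactK_dualMul Δ K hΔK, hFpK, hκpK, dualMulT_smul_left, dualMulT_smul_right,
      smul_smul, ← mul_inv, ← pow_add]
  have hΦKn : ∀ n', lactT (K ^ n')
        (dualMulT Δ (dualPow Δ εa.toLinearMap F a) (dualPow Δ εa.toLinearMap κ b))
      = (q2 ^ ((2 * a + b) * n'))⁻¹ •
          dualMulT Δ (dualPow Δ εa.toLinearMap F a) (dualPow Δ εa.toLinearMap κ b) := by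
    intro n'
    induction n' with
    | zero => simp [lactT_one]
    | succ n' ih =>
      rw [pow_succ, lactT_mul, hΦK, lactT_smul, ih, smul_smul, ← mul_inv, ← pow_add]
      congr 3
      ring
  have hΦE : ∀ a', lactT E
        (dualMulT Δ (dualPow Δ εa.toLinearMap F a') (dualPow Δ εa.toLinearMap κ b))
      = (qint q a' * (q - q⁻¹)⁻¹ * q2 ^ 2 * (q2 ^ (2 * a'))⁻¹ * (q2 ^ (2 * b))⁻¹) •
          dualMulT Δ (dualPow Δ εa.toLinearMap F (a' - 1)) (dualPow Δ εa.toLinearMap κ b) := by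
    intro a'
    rw [lactE_dualMul Δ E K hΔE, hκpE, dualMulT_zero_right, zero_add, hFpE, hκpK,
      lactT_smul, hκpK, smul_smul, dualMulT_smul_left, dualMulT_smul_right, smul_smul]
    congr 1
    rw [← mul_inv, ← pow_add, show b + b = 2 * b by ring]
  have hΦEm : ∀ m', lactT (E ^ m')
        (dualMulT Δ (dualPow Δ εa.toLinearMap F a) (dualPow Δ εa.toLinearMap κ b))
      = (qbinom q a m' * qfac q m' * ((q - q⁻¹) ^ m')⁻¹ * q2 ^ (m' * (m' + 1))
          * (q2 ^ (2 * m' * (a + b)))⁻¹) •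
          dualMulT Δ (dualPow Δ εa.toLinearMap F (a - m')) (dualPow Δ εa.toLinearMap κ b) := by
    intro m'
    induction m' with
    | zero =>
      rw [pow_zero, lactT_one, qbinom_zero', qfac_zero']
      simp
    | succ m' ih =>
      rw [pow_succ', lactT_mul, ih, lactT_smul, hΦE (a - m'), smul_smul,
        show a - m' - 1 = a - (m' + 1) by omega]
      congr 1
      by_cases hma : m' < a
      · obtain ⟨r, hr⟩ := Nat.exists_eq_add_of_lt hma
        subst hr
        rw [show m' + r + 1 - m' = r + 1 by omega]
        have hQ := qbinom_key' q hq0 hd (m' + r + 1) m'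
        rw [show m' + r + 1 - m' = r + 1 by omega] at hQ
        rw [qfac_succ']
        have e1 : ((q - q⁻¹) ^ m')⁻¹ * (q - q⁻¹)⁻¹ = ((q - q⁻¹) ^ (m' + 1))⁻¹ := by
          rw [← mul_inv, ← pow_succ]
        have e2 : q2 ^ (m' * (m' + 1)) * q2 ^ 2 *
            ((q2 ^ (2 * m' * (m' + r + 1 + b)))⁻¹ * (q2 ^ (2 * (r + 1)))⁻¹ * (q2 ^ (2 * b))⁻¹)
            = q2 ^ ((m' + 1) * (m' + 1 + 1)) * (q2 ^ (2 * (m' + 1) * (m' + r + 1 + b)))⁻¹ := by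
          rw [← mul_inv, ← mul_inv, ← pow_add, ← pow_add, ← pow_add]
          exact hq2quot _ _ _ _ (by ring)
        calc qbinom q (m' + r + 1) m' * qfac q m' * ((q - q⁻¹) ^ m')⁻¹ * q2 ^ (m' * (m' + 1)) *
              (q2 ^ (2 * m' * (m' + r + 1 + b)))⁻¹ *
            (qint q (r + 1) * (q - q⁻¹)⁻¹ * q2 ^ 2 * (q2 ^ (2 * (r + 1)))⁻¹ * (q2 ^ (2 * b))⁻¹)
            = (qbinom q (m' + r + 1) m' * qint q (r + 1)) * qfac q m' *
                (((q - q⁻¹) ^ m')⁻¹ * (q - q⁻¹)⁻¹) *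
                (q2 ^ (m' * (m' + 1)) * q2 ^ 2 *
                  ((q2 ^ (2 * m' * (m' + r + 1 + b)))⁻¹ * (q2 ^ (2 * (r + 1)))⁻¹ *
                    (q2 ^ (2 * b))⁻¹)) := by ring
          _ = (qbinom q (m' + r + 1) (m' + 1) * qint q (m' + 1)) * qfac q m' *
                ((q - q⁻¹) ^ (m' + 1))⁻¹ *
                (q2 ^ ((m' + 1) * (m' + 1 + 1)) *
                  (q2 ^ (2 * (m' + 1) * (m' + r + 1 + b)))⁻¹) := by rw [hQ, e1, e2]
          _ = qbinom q (m' + r + 1) (m' + 1) * (qint q (m' + 1) * qfac q m') *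
                ((q - q⁻¹) ^ (m' + 1))⁻¹ * q2 ^ ((m' + 1) * (m' + 1 + 1)) *
              (q2 ^ (2 * (m' + 1) * (m' + r + 1 + b)))⁻¹ := by ring
      · have h1 : qbinom q a (m' + 1) = 0 := qbinom_eq_zero' q _ _ (by omega)
        rcases Nat.lt_or_ge a m' with h2 | h2
        · rw [qbinom_eq_zero' q _ _ h2, h1]; ring
        · have : a = m' := by omega
          subst this
          rw [Nat.sub_self, qint_zero', h1]; ring
  -- final assembly
  rw [lactT_mul, hΦKn n, lactT_smul, hΦEm m, smul_smul]
  congr 1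
  rw [show (-(((b : ℤ) + 2 * a) * n) - 2 * m * (a + b) + m * (m + 1) : ℤ)
      = ((m * (m + 1) : ℕ) : ℤ) - (((2 * a + b) * n + 2 * m * (a + b) : ℕ) : ℤ) by
    push_cast; ring]
  rw [zpow_sub₀ hq20, zpow_natCast, zpow_natCast]
  field_simp
  ring
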